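/- Let G be a simple C4-free graph, let x, x1, x2 form a triangle, and let y be a neighbor of x with y ∉ {x1, x2}. Then within the punctured 2-ball of x, the vertices y and x1 lie in different connected components. -/

import Mathlib

open Finset

variable {V : Type*}

/-- Unweighted non-normalized graph Laplacian. -/
noncomputable def nnLap (G : SimpleGraph V) [G.LocallyFinite] (f : V → ℝ) (x : V) : ℝ :=
  ∑ y ∈ G.neighborFinset x, (f y - f x)

/-- Unweighted normalized graph Laplacian. -/
noncomputable def nLap (G : SimpleGraph V) [G.LocallyFinite] (f : V → ℝ) (x : V) : ℝ :=
  (∑ y ∈ G.neighborFinset x, (f y - f x)) / (G.degree x : ℝ)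

/-- Bakry–Émery carré du champ operator Γ for a Laplacian `L`. -/
noncomputable def gam (L : (V → ℝ) → V → ℝ) (f g : V → ℝ) (x : V) : ℝ :=
  (L (f * g) x - f x * L g x - g x * L f x) / 2

/-- Iterated carré du champ operator Γ₂ for a Laplacian `L`. -/
noncomputable def gam2 (L : (V → ℝ) → V → ℝ) (f g : V → ℝ) (x : V) : ℝ :=
  (L (gam L f g) x - gam L f (L g) x - gam L (L f) g x) / 2

/-- `G` has no 4-cycle subgraph, equivalently any two distinct vertices have at
most one common neighbor. -/
def C4Free (G : SimpleGraph V) : Prop :=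
  ∀ ⦃u v a b : V⦄, u ≠ v → G.Adj u a → G.Adj a v → G.Adj u b → G.Adj b v → a = b

/-- The punctured 2-ball of `x`: the graph on `S₁(x) ∪ S₂(x)` with the spherical
edges inside `S₁(x)` and the radial edges between `S₁(x)` and `S₂(x)`. -/
def pBall (G : SimpleGraph V) (x : V) : SimpleGraph V where
  Adj u v := G.Adj u v ∧ ((G.dist x u = 1 ∧ G.dist x v = 1) ∨
    (G.dist x u = 1 ∧ G.dist x v = 2) ∨ (G.dist x u = 2 ∧ G.dist x v = 1))
  symm := by
    constructor
    intro u v h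
    refine ⟨h.1.symm, ?_⟩
    tauto
  loopless := ⟨fun u h => G.irrefl h.1⟩

/-- If `x, x₁, x₂` form a triangle in a `C₄`-free graph and `y ∉ {x₁, x₂}` is a
neighbor of `x`, then `y` and `x₁` lie in different connected components of the
punctured 2-ball of `x`. -/
theorem stmt_3 (G : SimpleGraph V) (hC4 : C4Free G) (x x1 x2 y : V)
    (h1 : G.Adj x x1) (h2 : G.Adj x x2) (h12 : G.Adj x1 x2)
    (hy : G.Adj x y) (hy1 : y ≠ x1) (hy2 : y ≠ x2) :
    ¬ (pBall G x).Reachable y x1 := by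
   
  intro hreach
  have d1 : ∀ {a b : V}, G.dist a b = 1 → G.Adj a b :=
    fun h => SimpleGraph.dist_eq_one_iff_adj.mp h
  have d1' : ∀ {a b : V}, G.Adj a b → G.dist a b = 1 :=
    fun h => SimpleGraph.dist_eq_one_iff_adj.mpr h
  have step : ∀ u v : V, (u = x1 ∨ u = x2 ∨
      (G.dist x u = 2 ∧ (G.Adj x1 u ∨ G.Adj x2 u))) → (pBall G x).Adj u v →
      (v = x1 ∨ v = x2 ∨ (G.dist x v = 2 ∧ (G.Adj x1 v ∨ G.Adj x2 v))) := by
    intro u v hu ⟨huv, hcase⟩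
    rcases hu with hu | hu | ⟨hd2, hadj⟩
    · subst hu
      rcases hcase with ⟨_, hv⟩ | ⟨_, hv⟩ | ⟨hu1, _⟩
      · exact Or.inr (Or.inl (hC4 h1.ne h2 h12.symm (d1 hv) huv.symm).symm)
      · exact Or.inr (Or.inr ⟨hv, Or.inl huv⟩)
      · have := d1' h1; omega
    · subst hu
      rcases hcase with ⟨_, hv⟩ | ⟨_, hv⟩ | ⟨hu1, _⟩
      · exact Or.inl (hC4 h2.ne h1 h12 (d1 hv) huv.symm).symm
      · exact Or.inr (Or.inr ⟨hv, Or.inr huv⟩)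
      · have := d1' h2; omega
    · have hxu : x ≠ u := by
        rintro rfl; rw [SimpleGraph.dist_self] at hd2; omega
      rcases hcase with ⟨hu1, _⟩ | ⟨hu1, _⟩ | ⟨_, hv⟩
      · omega
      · omega
      · rcases hadj with h | h
        · exact Or.inl (hC4 hxu h1 h (d1 hv) huv.symm).symm
        · exact Or.inr (Or.inl (hC4 hxu h2 h (d1 hv) huv.symm).symm)
  obtain ⟨w⟩ := hreach.symm
  have key : ∀ (a b : V), (pBall G x).Walk a b →
      (a = x1 ∨ a = x2 ∨ (G.dist x a = 2 ∧ (G.Adj x1 a ∨ G.Adj x2 a))) →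
      (b = x1 ∨ b = x2 ∨ (G.dist x b = 2 ∧ (G.Adj x1 b ∨ G.Adj x2 b))) := by
    intro a b w
    induction w with
    | nil => exact id
    | cons h p ih => exact fun ha => ih (step _ _ ha h)
  rcases key x1 y w (Or.inl rfl) with h | h | ⟨hd, _⟩
  · exact hy1 h
  · exact hy2 h
  · have := d1' hy; omega
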